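/- Let a be a selfadjoint n × n complex matrix with trace zero. Then there exists a diagonal matrix d unitarily equivalent to a and a permutation matrix u such that all partial sums of the diagonal entries of u d u* lie in the interval [−‖a‖, ‖a‖]. -/

import Mathlib

open scoped Matrix.Norms.L2Operator


lemma diag_perm_conj (n : ℕ) (c : Fin n → ℂ) (σ : Equiv.Perm (Fin n)) (i : Fin n) :
    ((Matrix.of fun i j => if σ j = i then (1:ℂ) else 0) * Matrix.diagonal c *
      star (Matrix.of fun i j => if σ j = i then (1:ℂ) else 0)) i i = c (σ.symm i) := by
  have h : ∀ j : Fin n, (σ j = i) ↔ (j = σ.symm i) := fun j => by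
    exact Equiv.apply_eq_iff_eq_symm_apply σ
  simp only [Matrix.mul_apply, Matrix.star_apply, Matrix.of_apply, Matrix.diagonal_apply,
    Matrix.conjTranspose_apply, h]
  simp [Finset.sum_ite_eq', Finset.mul_sum, apply_ite, mul_ite, ite_mul]

lemma exists_good_index_nonneg {n : ℕ} (f : Fin (n+1) → ℝ) (M s : ℝ) (h0 : 0 ≤ s)
    (hf : ∀ i, |f i| ≤ M) (hs : |s| ≤ M) (hsum : |s + ∑ i, f i| ≤ M) :
    ∃ i, |s + f i| ≤ M := by
  by_cases hex : ∃ i, f i ≤ 0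
  · obtain ⟨i, hi⟩ := hex
    refine ⟨i, abs_le.2 ⟨?_, ?_⟩⟩
    · have := (abs_le.1 (hf i)).1; linarith
    · have := (abs_le.1 hs).2; linarith
  · push_neg at hex
    refine ⟨0, abs_le.2 ⟨?_, ?_⟩⟩
    · have hM : 0 ≤ M := le_trans (abs_nonneg s) hs
      have := (hex 0).le; linarith
    · have h1 : f 0 ≤ ∑ i, f i :=
        Finset.single_le_sum (fun i _ => (hex i).le) (Finset.mem_univ 0)
      have := (abs_le.1 hsum).2; linarith

lemma exists_good_index {n : ℕ} (f : Fin (n+1) → ℝ) (M s : ℝ)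
    (hf : ∀ i, |f i| ≤ M) (hs : |s| ≤ M) (hsum : |s + ∑ i, f i| ≤ M) :
    ∃ i, |s + f i| ≤ M := by
  rcases le_or_gt 0 s with h0 | h0
  · exact exists_good_index_nonneg f M s h0 hf hs hsum
  · have hsum' : |-s + ∑ i, (fun i => -f i) i| ≤ M := by
      have h1 : -s + ∑ i, (fun i => -f i) i = -(s + ∑ i, f i) := by
        simp; ring
      rw [h1, abs_neg]; exact hsum
    obtain ⟨i, hi⟩ := exists_good_index_nonneg (fun i => -f i) M (-s) (by linarith)
      (fun i => by simpa using hf i) (by simpa using hs) hsum'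
    exact ⟨i, by rw [show s + f i = -(-s + -f i) by ring, abs_neg]; exact hi⟩

lemma key_perm : ∀ (n : ℕ) (f : Fin n → ℝ) (M s : ℝ), (∀ i, |f i| ≤ M) → |s| ≤ M →
    |s + ∑ i, f i| ≤ M →
    ∃ σ : Equiv.Perm (Fin n),
      ∀ k : ℕ, |s + ∑ i : Fin n, (if (i:ℕ) < k then f (σ i) else 0)| ≤ M := by
  intro n
  induction n with
  | zero => exact fun f M s hf hs _ => ⟨1, fun k => by simpa using hs⟩
  | succ n IH =>
    intro f M s hf hs hsum
    obtain ⟨i, hi⟩ := exists_good_index f M s hf hs hsum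
    set g : Fin (n+1) → ℝ := f ∘ Equiv.swap 0 i with hg
    have hg0 : g 0 = f i := by simp [hg, Equiv.swap_apply_left]
    have hsumg : ∑ j, g j = ∑ j, f j := Equiv.sum_comp (Equiv.swap 0 i) f
    obtain ⟨σ', hσ'⟩ := IH (g ∘ Fin.succ) M (s + f i) (fun j => hf _) hi (by
      have h2 : (s + f i) + ∑ j : Fin n, g (Fin.succ j) = s + ∑ j, f j := by
        rw [← hsumg, Fin.sum_univ_succ g, hg0]; ring
      simpa [Function.comp] using h2 ▸ hsum)
    refine ⟨(Equiv.Perm.decomposeFin.symm (0, σ')).trans (Equiv.swap 0 i), ?_⟩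
    intro k
    cases k with
    | zero => simpa using hs
    | succ k =>
      have hσk := hσ' k
      rw [Fin.sum_univ_succ]
      have e0 : ((Equiv.Perm.decomposeFin.symm (0, σ')).trans (Equiv.swap 0 i)) 0 = i := by
        simp [Equiv.Perm.decomposeFin_symm_apply_zero, Equiv.swap_apply_left]
      have es : ∀ j : Fin n,
          ((Equiv.Perm.decomposeFin.symm (0, σ')).trans (Equiv.swap 0 i)) (Fin.succ j)
            = Equiv.swap 0 i (Fin.succ (σ' j)) := by
        intro j
        simp [Equiv.Perm.decomposeFin_symm_apply_succ]
      simp only [e0, es, Fin.val_zero, Nat.zero_lt_succ, if_true, Fin.val_succ,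
        Nat.succ_lt_succ_iff]
      have : ∀ j : Fin n, f (Equiv.swap 0 i (Fin.succ (σ' j))) = (g ∘ Fin.succ) (σ' j) := by
        intro j; simp [hg]
      simp only [this]
      calc |s + (f i + ∑ j : Fin n, if (j:ℕ) < k then (g ∘ Fin.succ) (σ' j) else 0)|
          = |(s + f i) + ∑ j : Fin n, if (j:ℕ) < k then (g ∘ Fin.succ) (σ' j) else 0| := by
            ring_nf
        _ ≤ M := hσk

/-- Let `a` be a selfadjoint `n × n` complex matrix with trace zero.  Then there is a
diagonal matrix `d` unitarily equivalent to `a` and a permutation matrix `u` such that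
every partial sum of the diagonal entries of `u d u*` lies in `[−‖a‖, ‖a‖]` (the diagonal
entries are real, so this is expressed as `|partial sum| ≤ ‖a‖`). -/
theorem exists_diagonal_perm_partial_sums_bounded
    (n : ℕ) (a : Matrix (Fin n) (Fin n) ℂ)
    (ha : IsSelfAdjoint a) (htr : a.trace = 0) :
    ∃ (d : Matrix (Fin n) (Fin n) ℂ) (U : Matrix (Fin n) (Fin n) ℂ)
      (σ : Equiv.Perm (Fin n)),
      d.IsDiag ∧ U ∈ Matrix.unitaryGroup (Fin n) ℂ ∧ a = U * d * star U ∧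
      (let u : Matrix (Fin n) (Fin n) ℂ := Matrix.of fun i j => if σ j = i then 1 else 0;
        ∀ k : ℕ, ‖∑ i : Fin n,
          if (i : ℕ) < k then (u * d * star u) i i else 0‖ ≤ ‖a‖) := by
  have hA : a.IsHermitian := ha
  set f : Fin n → ℝ := hA.eigenvalues with hf
  set c : Fin n → ℂ := fun i => (f i : ℂ) with hc
  set U : Matrix (Fin n) (Fin n) ℂ := (hA.eigenvectorUnitary : Matrix (Fin n) (Fin n) ℂ) with hU
  have hspec : a = U * Matrix.diagonal c * star U := by
    have := hA.spectral_theorem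
    convert this using 2
    rfl
  have hUmem : U ∈ Matrix.unitaryGroup (Fin n) ℂ := hA.eigenvectorUnitary.2
  -- trace
  have htrsum : ∑ i, f i = 0 := by
    have h1 : a.trace = (Matrix.diagonal c).trace := by
      rw [hspec, Matrix.trace_mul_cycle,
        (Matrix.mem_unitaryGroup_iff'.mp hUmem), one_mul]
    have h2 : (Matrix.diagonal c).trace = ((∑ i, f i : ℝ) : ℂ) := by
      simp [Matrix.trace_diagonal, hc]
    have := htr
    rw [h1, h2] at this
    exact_mod_cast this
  -- eigenvalue bound
  have hbound : ∀ i, |f i| ≤ ‖a‖ := by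
    intro i
    have hv := hA.mulVec_eigenvectorBasis i
    have hle := a.l2_opNorm_mulVec (hA.eigenvectorBasis i)
    have hnorm1 : ‖hA.eigenvectorBasis i‖ = 1 := hA.eigenvectorBasis.orthonormal.1 i
    have heq : ‖(EuclideanSpace.equiv (Fin n) ℂ).symm (a.mulVec (hA.eigenvectorBasis i))‖
        = |f i| := by
      have h2 : (EuclideanSpace.equiv (Fin n) ℂ).symm (a.mulVec (hA.eigenvectorBasis i))
          = f i • (hA.eigenvectorBasis i) :=
        congrArg ((EuclideanSpace.equiv (Fin n) ℂ).symm) hv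
      rw [h2, norm_smul, hnorm1, mul_one, Real.norm_eq_abs]
    calc |f i| = _ := heq.symm
      _ ≤ ‖a‖ * ‖hA.eigenvectorBasis i‖ := hle
      _ = ‖a‖ := by rw [hnorm1, mul_one]
  obtain ⟨π, hπ⟩ := key_perm n f ‖a‖ 0 hbound (by simpa using norm_nonneg a)
    (by simpa [htrsum] using norm_nonneg a)
  refine ⟨Matrix.diagonal c, U, π.symm, Matrix.isDiag_diagonal c, hUmem, hspec, ?_⟩
  show ∀ k : ℕ, ‖∑ i : Fin n,
      if (i : ℕ) < k then ((Matrix.of fun i j => if π.symm j = i then (1:ℂ) else 0) *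
        Matrix.diagonal c *
        star (Matrix.of fun i j => if π.symm j = i then (1:ℂ) else 0)) i i else 0‖ ≤ ‖a‖
  intro k
  have hdiag : ∀ i : Fin n,
      ((Matrix.of fun i j => if π.symm j = i then (1:ℂ) else 0) * Matrix.diagonal c *
        star (Matrix.of fun i j => if π.symm j = i then (1:ℂ) else 0)) i i = c (π i) := by
    intro i
    rw [diag_perm_conj n c π.symm i, Equiv.symm_symm]
  simp only [hdiag]
  have hsum : (∑ i : Fin n, if (i : ℕ) < k then c (π i) else 0)
      = ((∑ i : Fin n, if (i : ℕ) < k then f (π i) else 0 : ℝ) : ℂ) := by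
    rw [Complex.ofReal_sum]
    exact Finset.sum_congr rfl fun i _ => by split <;> simp [hc]
  rw [hsum, Complex.norm_real]
  simpa using hπ k
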